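/- Let (E,𝓔) be a measurable space, μ an atomless σ-finite measure, Q(x,dy) = q(x,y)μ(dy) a μ-reversible Markov kernel with jointly measurable density q, π : E → (0,∞) a measurable probability density with respect to μ such that μ-ess sup π = +∞, and α(x,y) = min{1, π(y)/π(x)}. For M ∈ ℕ define Q_*(x,dy) = Σ_{m=1}^{M} C(M,m) Q^m(x,dy) (so Q_*(x,E) = 2^M − 1), and let q_*(x,y) be its density with respect to μ. Then there do not exist M ∈ ℕ, c > 0, and a probability measure ξ(dy) = h(y)μ(dy) with bounded measurable density h, such that q_*(x,y)α(x,y)μ(dy) ≥ c·ξ(dy) for every x ∈ E. -/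

import Mathlib

open MeasureTheory ProbabilityTheory Filter Topology
open scoped ENNReal

/-- The `m`-fold composition of a Markov kernel (`kiter Q 0` is the identity kernel). -/
noncomputable def kiter {E : Type*} [MeasurableSpace E] (Q : Kernel E E) : ℕ → Kernel E E
  | 0 => Kernel.id
  | n + 1 => Q ∘ₖ kiter Q n

instance kiter_markov {E : Type*} [MeasurableSpace E] (Q : Kernel E E) [IsMarkovKernel Q]
    (m : ℕ) : IsMarkovKernel (kiter Q m) := by
  induction m with
  | zero => rw [kiter]; infer_instance
  | succ n ih => rw [kiter]; infer_instance

/-- If `μ-ess sup π = +∞`, then there is no minorization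
`q_*(x,y)α(x,y)μ(dy) ≥ c·ξ(dy)`, uniform in `x`, where
`Q_*(x,dy) = Σ_{m=1}^M C(M,m) Q^m(x,dy)` has density `q_*` with respect to `μ`,
`α(x,y) = min{1, π(y)/π(x)}`, and `ξ = h·μ` is a probability measure with bounded
density `h`. -/
theorem stmt_1 {E : Type*} [MeasurableSpace E]
    (μ : Measure E) [SigmaFinite μ] [NullSingletonClass μ]
    (Q : Kernel E E) [IsMarkovKernel Q]
    (q : E → E → ℝ≥0∞) (hq_meas : Measurable (Function.uncurry q))
    (hQq : ∀ x : E, (Q x : Measure E) = μ.withDensity (q x))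
    (hQrev : ∀ A B : Set E, MeasurableSet A → MeasurableSet B →
      ∫⁻ x in A, Q x B ∂μ = ∫⁻ x in B, Q x A ∂μ)
    (π : E → ℝ≥0∞) (hπ_meas : Measurable π)
    (hπ_pos : ∀ x, 0 < π x) (hπ_fin : ∀ x, π x ≠ ⊤)
    (hπ_prob : ∫⁻ x, π x ∂μ = 1)
    (hess : essSup π μ = ⊤) :
    ¬ ∃ (M : ℕ) (c : ℝ) (qstar : E → E → ℝ≥0∞) (hfun : E → ℝ≥0∞),
        1 ≤ M ∧ 0 < c ∧
        -- `q_*` is a jointly measurable density of `Q_* = Σ_{m=1}^M C(M,m) Q^m` w.r.t. `μ`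
        Measurable (Function.uncurry qstar) ∧
        (∀ x : E, μ.withDensity (qstar x)
          = ∑ m ∈ Finset.Icc 1 M, (M.choose m) • ((kiter Q m) x : Measure E)) ∧
        -- `ξ = h·μ` is a probability measure with bounded measurable density `h`
        Measurable hfun ∧ (∃ Cb : ℝ≥0∞, Cb ≠ ⊤ ∧ ∀ y, hfun y ≤ Cb) ∧
        ∫⁻ y, hfun y ∂μ = 1 ∧
        -- the minorization `q_*(x,y)α(x,y)μ(dy) ≥ c·ξ(dy)` for every `x`
        (∀ (x : E) (A : Set E), MeasurableSet A →
          ENNReal.ofReal c * ∫⁻ y in A, hfun y ∂μ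
            ≤ ∫⁻ y in A, qstar x y * min 1 (π y / π x) ∂μ) := by
  rintro ⟨M, c, qstar, hfun, hM, hc, hqstar_meas, hqstar, hh_meas, ⟨Cb, hCb, hhCb⟩,
    hh_prob, hmin⟩
  -- `π` is unbounded (pointwise): for every `n` there is `x` with `n ≤ π x`.
  have hunb : ∀ n : ℕ, ∃ x : E, (n : ℝ≥0∞) ≤ π x := by
    intro n
    by_contra hcon
    push_neg at hcon
    have : essSup π μ ≤ (n : ℝ≥0∞) :=
      essSup_le_of_ae_le _ (Filter.Eventually.of_forall fun x => (hcon x).le)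
    rw [hess] at this
    exact ENNReal.natCast_ne_top n (top_le_iff.mp this)
  -- total mass bound for `Q_*`
  set K : ℝ≥0∞ := ∑ m ∈ Finset.Icc 1 M, (M.choose m : ℝ≥0∞) with hK
  have hK_ne_top : K ≠ ⊤ := by
    refine (ENNReal.sum_lt_top.mpr fun m _ => ?_).ne
    exact ENNReal.natCast_lt_top _
  have hQstar_le : ∀ (x : E) (A : Set E), MeasurableSet A →
      ∫⁻ y in A, qstar x y ∂μ ≤ K := by
    intro x A hA
    have h1 : ∫⁻ y in A, qstar x y ∂μ = μ.withDensity (qstar x) A := by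
      rw [withDensity_apply _ hA]
    rw [h1, hqstar x]
    rw [Measure.finset_sum_apply]
    refine Finset.sum_le_sum fun m _ => ?_
    rw [Measure.smul_apply, nsmul_eq_mul]
    calc (M.choose m : ℝ≥0∞) * (kiter Q m) x A
        ≤ (M.choose m : ℝ≥0∞) * 1 := by
          exact mul_le_mul_right prob_le_one _
      _ = (M.choose m : ℝ≥0∞) := mul_one _
  -- key step: for every `s : ℕ`, `∫_{π ≤ s} h ∂μ = 0`
  have hzero : ∀ s : ℕ, ∫⁻ y in {y | π y ≤ (s : ℝ≥0∞)}, hfun y ∂μ = 0 := by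
    intro s
    set A : Set E := {y | π y ≤ (s : ℝ≥0∞)} with hA
    have hA_meas : MeasurableSet A := hπ_meas measurableSet_Iic
    set L : ℝ≥0∞ := ENNReal.ofReal c * ∫⁻ y in A, hfun y ∂μ with hL
    have hbound : ∀ n : ℕ, L ≤ (s : ℝ≥0∞) * K * ((n : ℝ≥0∞))⁻¹ := by
      intro n
      obtain ⟨x, hx⟩ := hunb n
      have key : ∫⁻ y in A, qstar x y * min 1 (π y / π x) ∂μ
          ≤ ((s : ℝ≥0∞) / π x) * ∫⁻ y in A, qstar x y ∂μ := by
        rw [← lintegral_const_mul' _ _ (by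
          exact (ENNReal.div_lt_top (ENNReal.natCast_ne_top s) (hπ_pos x).ne').ne)]
        refine setLIntegral_mono' hA_meas fun y hy => ?_
        calc qstar x y * min 1 (π y / π x)
            ≤ qstar x y * (π y / π x) := mul_le_mul_right (min_le_right _ _) _
          _ ≤ qstar x y * ((s : ℝ≥0∞) / π x) :=
              mul_le_mul_right (ENNReal.div_le_div_right hy _) _
          _ = (s : ℝ≥0∞) / π x * qstar x y := mul_comm _ _
      have := (hmin x A hA_meas).trans key
      refine this.trans ?_
      calc (s : ℝ≥0∞) / π x * ∫⁻ y in A, qstar x y ∂μ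
          ≤ (s : ℝ≥0∞) / π x * K := mul_le_mul_right (hQstar_le x A hA_meas) _
        _ ≤ (s : ℝ≥0∞) / (n : ℝ≥0∞) * K := by
            exact mul_le_mul_left (ENNReal.div_le_div_left hx _) _
        _ = (s : ℝ≥0∞) * K * ((n : ℝ≥0∞))⁻¹ := by
            rw [ENNReal.div_eq_inv_mul]; ring
    have hLzero : L = 0 := by
      have htend : Tendsto (fun n : ℕ => (s : ℝ≥0∞) * K * ((n : ℝ≥0∞))⁻¹) atTop (𝓝 0) := by
        have := ENNReal.Tendsto.const_mul (a := (s : ℝ≥0∞) * K) (b := 0)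
          ENNReal.tendsto_inv_nat_nhds_zero (Or.inr (ENNReal.mul_ne_top (ENNReal.natCast_ne_top s) hK_ne_top))
        simpa using this
      have : L ≤ 0 := ge_of_tendsto' htend hbound
      exact le_antisymm this (zero_le)
    have hcne : ENNReal.ofReal c ≠ 0 := by
      simp [ENNReal.ofReal_eq_zero, not_le, hc]
    rcases mul_eq_zero.mp hLzero with h | h
    · exact absurd h hcne
    · exact h
  -- conclude: the whole integral of `h` is zero, contradicting `∫ h = 1`
  set ν : Measure E := μ.withDensity hfun with hν
  have hA_mono : Monotone (fun s : ℕ => {y | π y ≤ (s : ℝ≥0∞)}) := by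
    intro a b hab y hy
    simp only [Set.mem_setOf_eq] at hy ⊢
    exact hy.trans (Nat.cast_le.mpr hab)
  have hA_union : ⋃ s : ℕ, {y | π y ≤ (s : ℝ≥0∞)} = Set.univ := by
    ext y
    simp only [Set.mem_iUnion, Set.mem_setOf_eq, Set.mem_univ, iff_true]
    obtain ⟨n, hn⟩ := ENNReal.exists_nat_gt (hπ_fin y)
    exact ⟨n, hn.le⟩
  have hν_zero : ∀ s : ℕ, ν {y | π y ≤ (s : ℝ≥0∞)} = 0 := by
    intro s
    have hms : MeasurableSet {y : E | π y ≤ (s : ℝ≥0∞)} := hπ_meas measurableSet_Iic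
    rw [hν, withDensity_apply _ hms]
    exact hzero s
  have hν_univ : ν Set.univ = 0 := by
    rw [← hA_union]
    rw [(hA_mono.directed_le).measure_iUnion]
    simp [hν_zero]
  have : (1 : ℝ≥0∞) = 0 := by
    rw [← hh_prob]
    have : ν Set.univ = ∫⁻ y, hfun y ∂μ := by
      rw [hν, withDensity_apply _ MeasurableSet.univ, setLIntegral_univ]
    rw [← this, hν_univ]
  exact one_ne_zero this
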